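/- arXiv:2004.11714 — 4 statements merged into one kernel-verified Lean document; each statement's English description precedes it below -/
import Mathlib

section
/- Let X be a finite set, and let p_data and p_LM be probability distributions on X with p_LM(x) > 0 whenever p_data(x) > 0. For a function E : X → ℝ, define the objective J(E) = ∑_{x} p_data(x) · log(1/(1 + exp(E(x)))) + ∑_{x} p_LM(x) · log(1/(1 + exp(-E(x)))). Then J(E) is maximized when exp(-E(x)) = p_data(x)/p_LM(x) for all x in the support of p_LM, i.e., the pointwise maximizer of the integrand is E*(x) = log(p_LM(x)/p_data(x)). -/
open Real Finset

lemma nce_uv (t : ℝ) : 1 / (1 + Real.exp t) + 1 / (1 + Real.exp (-t)) = 1 := by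
  have h1 : (0:ℝ) < 1 + Real.exp t := by positivity
  have h2 : (0:ℝ) < 1 + Real.exp (-t) := by positivity
  have he : Real.exp (-t) = 1 / Real.exp t := by
    rw [Real.exp_neg]; ring
  field_simp [he]
  have hm : Real.exp (-t) * Real.exp t = 1 := by rw [← Real.exp_add]; simp
  linarith

lemma nce_key (a b t tstar : ℝ) (ha : 0 < a) (hb : 0 < b)
    (hts : Real.exp (-tstar) = a / b) :
    a * Real.log (1 / (1 + Real.exp t)) + b * Real.log (1 / (1 + Real.exp (-t)))
      ≤ a * Real.log (1 / (1 + Real.exp tstar)) + b * Real.log (1 / (1 + Real.exp (-tstar))) := by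
  have hab : 0 < a + b := by linarith
  have hts' : Real.exp tstar = b / a := by
    have := Real.exp_neg tstar
    rw [hts] at this
    -- this : a / b = (exp tstar)⁻¹
    field_simp at this ⊢
    linarith
  have e1 : 1 / (1 + Real.exp tstar) = a / (a + b) := by
    rw [hts']; field_simp
  have e2 : 1 / (1 + Real.exp (-tstar)) = b / (a + b) := by
    rw [hts]; field_simp
    ring
  rw [e1, e2]
  set u := 1 / (1 + Real.exp t) with hu
  set v := 1 / (1 + Real.exp (-t)) with hv
  have hu0 : 0 < u := by positivity
  have hv0 : 0 < v := by positivity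
  have huv : u + v = 1 := nce_uv t
  have l1 : Real.log (u * (a + b) / a) ≤ u * (a + b) / a - 1 :=
    Real.log_le_sub_one_of_pos (by positivity)
  have l2 : Real.log (v * (a + b) / b) ≤ v * (a + b) / b - 1 :=
    Real.log_le_sub_one_of_pos (by positivity)
  have r1 : Real.log (u * (a + b) / a) = Real.log u - Real.log (a / (a + b)) := by
    rw [Real.log_div (by positivity) (ne_of_gt ha), Real.log_mul (ne_of_gt hu0) (ne_of_gt hab),
        Real.log_div (ne_of_gt ha) (ne_of_gt hab)]
    ring
  have r2 : Real.log (v * (a + b) / b) = Real.log v - Real.log (b / (a + b)) := by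
    rw [Real.log_div (by positivity) (ne_of_gt hb), Real.log_mul (ne_of_gt hv0) (ne_of_gt hab),
        Real.log_div (ne_of_gt hb) (ne_of_gt hab)]
    ring
  rw [r1] at l1
  rw [r2] at l2
  have m1 := mul_le_mul_of_nonneg_left l1 ha.le
  have m2 := mul_le_mul_of_nonneg_left l2 hb.le
  have key : a * (u * (a + b) / a - 1) + b * (v * (a + b) / b - 1) = 0 := by
    field_simp
    nlinarith [huv]
  nlinarith [m1, m2]

/-- NCE optimality: the objective
`J(E) = ∑ p_data(x)·log(1/(1+e^{E x})) + ∑ p_LM(x)·log(1/(1+e^{-E x}))`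
is maximized when `exp(-E(x)) = p_data(x)/p_LM(x)` on the support of `p_LM`. -/
theorem stmt_0 {X : Type*} [Fintype X]
    (pdata pLM : X → ℝ)
    (hd0 : ∀ x, 0 ≤ pdata x) (hl0 : ∀ x, 0 ≤ pLM x)
    (hd1 : ∑ x, pdata x = 1) (hl1 : ∑ x, pLM x = 1)
    (hsupp : ∀ x, 0 < pdata x → 0 < pLM x)
    (J : (X → ℝ) → ℝ)
    (hJ : J = fun E => (∑ x, pdata x * Real.log (1 / (1 + Real.exp (E x))))
        + ∑ x, pLM x * Real.log (1 / (1 + Real.exp (-(E x)))))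
    (Estar : X → ℝ)
    (hEstar : ∀ x, 0 < pLM x → Real.exp (-(Estar x)) = pdata x / pLM x) :
    ∀ E : X → ℝ, J E ≤ J Estar := by
  intro E
  subst hJ
  simp only
  rw [← Finset.sum_add_distrib, ← Finset.sum_add_distrib]
  apply Finset.sum_le_sum
  intro x _
  rcases lt_or_eq_of_le (hl0 x) with hlx | hlx
  · have hdx : 0 < pdata x := by
      by_contra h
      have hd : pdata x = 0 := le_antisymm (not_lt.mp h) (hd0 x)
      have := hEstar x hlx
      rw [hd, zero_div] at this
      exact (Real.exp_pos _).ne' this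
    exact nce_key (pdata x) (pLM x) (E x) (Estar x) hdx hlx (hEstar x hlx)
  · have hdx : pdata x = 0 := by
      by_contra h
      have := hsupp x (lt_of_le_of_ne (hd0 x) (Ne.symm h))
      linarith
    rw [hdx, ← hlx]
    simp
end

section
/- Let Y_1, Y_2, … be i.i.d. positive bounded random variables with mean μ, bounded below by c > 0. Define T_n = log((1/n)∑_{i=1}^n Y_i). Then the sequence E[T_n] is nondecreasing in n: E[T_n] ≤ E[T_{n+1}] for all n ≥ 1. -/
open Real MeasureTheory

lemma aux_log_integrable {α : Type*} [MeasurableSpace α] (μ : Measure α) [IsFiniteMeasure μ]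
    {h : α → ℝ} (hm : Measurable h) {c C : ℝ} (hc : 0 < c)
    (hb : ∀ a, c ≤ h a ∧ h a ≤ C) :
    Integrable (fun a => Real.log (h a)) μ := by
  refine Integrable.mono' (integrable_const (|Real.log c| + |Real.log C|))
    (Real.measurable_log.comp hm).aestronglyMeasurable ?_
  filter_upwards with a
  have h1 := (hb a).1; have h2 := (hb a).2
  have hx : 0 < h a := lt_of_lt_of_le hc h1
  have l1 : Real.log c ≤ Real.log (h a) := Real.log_le_log hc h1
  have l2 : Real.log (h a) ≤ Real.log C := Real.log_le_log hx h2
  rw [Real.norm_eq_abs, abs_le]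
  constructor
  · nlinarith [neg_abs_le (Real.log c), abs_nonneg (Real.log C)]
  · nlinarith [le_abs_self (Real.log C), abs_nonneg (Real.log c)]

/-- For i.i.d. positive bounded random variables `Y_i` with `c ≤ Y ≤ C`,
`0 < c`, and mean `μ`, the expectations of `T_n = log((1/n)∑ Y_i)` are
nondecreasing in `n`. -/
theorem stmt_5 {Ω : Type*} [MeasurableSpace Ω]
    (P : Measure Ω) [IsProbabilityMeasure P]
    (Y : Ω → ℝ) (hYm : Measurable Y)
    (c C : ℝ) (hc : 0 < c) (hbd : ∀ ω, c ≤ Y ω ∧ Y ω ≤ C)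
    (μval : ℝ) (hμ : μval = ∫ ω, Y ω ∂P) :
    ∀ n : ℕ, 1 ≤ n →
      (∫ ω : Fin n → Ω, Real.log ((1 / (n : ℝ)) * ∑ i, Y (ω i))
          ∂(Measure.pi fun _ => P))
        ≤ ∫ ω : Fin (n + 1) → Ω,
            Real.log ((1 / ((n : ℝ) + 1)) * ∑ i, Y (ω i))
          ∂(Measure.pi fun _ => P) := by
  intro n hn
  have hn' : (0:ℝ) < n := by exact_mod_cast hn
  set Pa : Measure (Fin n → Ω) := Measure.pi fun _ => P with hPa
  set Pb : Measure (Fin (n+1) → Ω) := Measure.pi fun _ => P with hPb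
  -- mean bounds
  have hmean : ∀ (m : ℕ), (0:ℝ) < m → ∀ g : Fin m → Ω,
      c ≤ (1/(m:ℝ)) * ∑ i, Y (g i) ∧ (1/(m:ℝ)) * ∑ i, Y (g i) ≤ C := by
    intro m hm g
    have h1 : (m:ℝ) * c ≤ ∑ i, Y (g i) := by
      calc (m:ℝ) * c = ∑ _i : Fin m, c := by simp [mul_comm]
        _ ≤ _ := Finset.sum_le_sum fun i _ => (hbd (g i)).1
    have h2 : ∑ i, Y (g i) ≤ (m:ℝ) * C := by
      calc ∑ i, Y (g i) ≤ ∑ _i : Fin m, C := Finset.sum_le_sum fun i _ => (hbd (g i)).2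
        _ = (m:ℝ) * C := by simp [mul_comm]
    constructor
    · rw [one_div_mul_eq_div, le_div_iff₀ hm]; linarith
    · rw [one_div_mul_eq_div, div_le_iff₀ hm]; linarith
  -- the n-sample mean and its log
  set μF : (Fin n → Ω) → ℝ := fun ω => (1/(n:ℝ)) * ∑ i, Y (ω i) with hμF
  set f : (Fin n → Ω) → ℝ := fun ω => Real.log (μF ω) with hfdef
  have hμFm : Measurable μF :=
    measurable_const.mul (Finset.measurable_sum _ fun i _ => hYm.comp (measurable_pi_apply i))
  have hfm : Measurable f := Real.measurable_log.comp hμFm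
  have hfint : Integrable f Pa := aux_log_integrable Pa hμFm hc (fun a => hmean n hn' a)
  -- measure-preservation of leave-one-out maps
  have key : ∀ j : Fin (n+1),
      ∫ ω, f (fun i => ω (j.succAbove i)) ∂Pb = ∫ ω, f ω ∂Pa := by
    intro j
    have h1 := (measurePreserving_piFinSuccAbove (fun _ : Fin (n+1) => P) j).integral_comp
      (MeasurableEquiv.measurableEmbedding _) (fun p : Ω × (Fin n → Ω) => f p.2)
    have h2 : ∫ p : Ω × (Fin n → Ω), f p.2 ∂(P.prod Pa) = ∫ ω, f ω ∂Pa := by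
      have he : ∫ ω, f ω ∂Pa = ∫ ω, f ω ∂((P.prod Pa).snd) := by rw [Measure.snd_prod]
      rw [he, Measure.snd, integral_map measurable_snd.aemeasurable
        (by rw [← Measure.snd, Measure.snd_prod]; exact hfm.aestronglyMeasurable)]
    calc ∫ ω, f (fun i => ω (j.succAbove i)) ∂Pb
        = ∫ p : Ω × (Fin n → Ω), f p.2 ∂(P.prod Pa) := h1
      _ = ∫ ω, f ω ∂Pa := h2
  -- pointwise Jensen inequality
  have hpt : ∀ ω : Fin (n+1) → Ω,
      ∑ j : Fin (n+1), (1/((n:ℝ)+1)) * f (fun i => ω (j.succAbove i))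
        ≤ Real.log ((1/((n:ℝ)+1)) * ∑ i, Y (ω i)) := by
    intro ω
    have hcc := strictConcaveOn_log_Ioi.concaveOn
    have hw : ∑ _j : Fin (n+1), (1/((n:ℝ)+1)) = 1 := by
      rw [Finset.sum_const, Finset.card_univ, Fintype.card_fin, nsmul_eq_mul]
      push_cast
      field_simp
    have hmem : ∀ j : Fin (n+1), j ∈ Finset.univ →
        ((1/(n:ℝ)) * ∑ i, Y (ω (j.succAbove i))) ∈ Set.Ioi (0:ℝ) := by
      intro j _
      exact lt_of_lt_of_le hc (hmean n hn' (fun i => ω (j.succAbove i))).1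
    have hjen := hcc.le_map_sum (t := Finset.univ)
      (w := fun _ : Fin (n+1) => 1/((n:ℝ)+1))
      (p := fun j : Fin (n+1) => (1/(n:ℝ)) * ∑ i, Y (ω (j.succAbove i)))
      (fun j _ => by positivity) hw hmem
    have hsum : ∑ j : Fin (n+1), (1/((n:ℝ)+1)) * ((1/(n:ℝ)) * ∑ i, Y (ω (j.succAbove i)))
        = (1/((n:ℝ)+1)) * ∑ i, Y (ω i) := by
      have h3 : ∀ j : Fin (n+1), ∑ i, Y (ω (j.succAbove i)) = (∑ i, Y (ω i)) - Y (ω j) := by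
        intro j
        have := Fin.sum_univ_succAbove (fun i => Y (ω i)) j
        linarith
      simp only [h3]
      rw [← Finset.mul_sum]
      rw [← Finset.mul_sum, Finset.sum_sub_distrib, Finset.sum_const, Finset.card_univ,
        Fintype.card_fin]
      push_cast
      field_simp
      ring
    simp only [smul_eq_mul] at hjen
    rw [hsum] at hjen
    exact hjen
  -- integrability on the (n+1)-product
  have hintj : ∀ j : Fin (n+1),
      Integrable (fun ω : Fin (n+1) → Ω => f (fun i => ω (j.succAbove i))) Pb := by
    intro j
    exact aux_log_integrable Pb
      (hμFm.comp (measurable_pi_iff.2 fun i => measurable_pi_apply _))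
      hc (fun a => hmean n hn' _)
  have hintR : Integrable
      (fun ω : Fin (n+1) → Ω => Real.log ((1/((n:ℝ)+1)) * ∑ i, Y (ω i))) Pb := by
    have := aux_log_integrable Pb
      (h := fun ω : Fin (n+1) → Ω => (1/((n:ℝ)+1)) * ∑ i, Y (ω i))
      (measurable_const.mul (Finset.measurable_sum _ fun i _ => hYm.comp (measurable_pi_apply i)))
      hc (fun a => by
        have := hmean (n+1) (by positivity) a
        push_cast at this ⊢
        exact this)
    exact this
  -- assemble
  calc ∫ ω, f ω ∂Pa
      = ∑ j : Fin (n+1), (1/((n:ℝ)+1)) * ∫ ω, f (fun i => ω (j.succAbove i)) ∂Pb := by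
        simp only [key, Finset.sum_const, Finset.card_univ, Fintype.card_fin, nsmul_eq_mul]
        push_cast
        field_simp
    _ = ∫ ω, ∑ j : Fin (n+1), (1/((n:ℝ)+1)) * f (fun i => ω (j.succAbove i)) ∂Pb := by
        rw [integral_finset_sum _ (fun j _ => (hintj j).const_mul _)]
        simp_rw [integral_const_mul]
    _ ≤ ∫ ω, Real.log ((1/((n:ℝ)+1)) * ∑ i, Y (ω i)) ∂Pb := by
        refine integral_mono (integrable_finset_sum _ fun j _ => (hintj j).const_mul _)
          hintR hpt
end

section
/- Let X be a finite set, p a probability distribution on X with full support, and w : X → (0, ∞). Given n i.i.d. samples x_1, …, x_n from p, consider the resampling procedure that selects index i with probability w(x_i)/∑_{j=1}^n w(x_j) and outputs x_i. For n = 1, the output distribution equals p; and as n → ∞, for every x ∈ X, the probability that the output equals x converges to p(x)·w(x)/∑_y p(y)·w(y). -/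
open Real Finset Filter

section Aux

variable {X : Type*} [Fintype X] [DecidableEq X]

private lemma aux_prodE {n : ℕ} (g : Fin n → X → ℝ) :
    ∑ s : Fin n → X, ∏ i, g i (s i) = ∏ i, ∑ y, g i y :=
  (Fintype.prod_sum g).symm

private lemma aux_one (p : X → ℝ) (hp1 : ∑ x, p x = 1) (n : ℕ) :
    ∑ s : Fin n → X, ∏ i, p (s i) = 1 := by
  rw [aux_prodE (fun _ : Fin n => p)]
  simp [hp1]

private lemma aux_coord (p : X → ℝ) (hp1 : ∑ x, p x = 1) {n : ℕ} (j : Fin n) (u : X → ℝ) :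
    ∑ s : Fin n → X, (∏ i, p (s i)) * u (s j) = ∑ y, p y * u y := by
  have h1 : ∀ s : Fin n → X,
      (∏ i, p (s i)) * u (s j) = ∏ i, (p (s i) * if i = j then u (s i) else 1) := by
    intro s
    rw [Finset.prod_mul_distrib, Finset.prod_ite_eq' Finset.univ j (fun i => u (s i))]
    simp
  rw [Finset.sum_congr rfl (fun s _ => h1 s),
    aux_prodE (fun i y => p y * if i = j then u y else 1)]
  have h2 : ∀ i : Fin n, (∑ y, p y * if i = j then u y else 1)
      = if i = j then ∑ y, p y * u y else 1 := by
    intro i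
    by_cases h : i = j <;> simp [h, hp1]
  rw [Finset.prod_congr rfl (fun i _ => h2 i),
    Finset.prod_ite_eq' Finset.univ j (fun _ => ∑ y, p y * u y)]
  simp

private lemma aux_pair (p : X → ℝ) (hp1 : ∑ x, p x = 1) {n : ℕ} {i0 j0 : Fin n}
    (hij : i0 ≠ j0) (u v : X → ℝ) :
    ∑ s : Fin n → X, (∏ i, p (s i)) * (u (s i0) * v (s j0))
      = (∑ y, p y * u y) * (∑ y, p y * v y) := by
  have h1 : ∀ s : Fin n → X,
      (∏ i, p (s i)) * (u (s i0) * v (s j0))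
        = ∏ i, (p (s i) * ((if i = i0 then u (s i) else 1) * (if i = j0 then v (s i) else 1))) := by
    intro s
    rw [Finset.prod_mul_distrib, Finset.prod_mul_distrib,
      Finset.prod_ite_eq' Finset.univ i0 (fun i => u (s i)),
      Finset.prod_ite_eq' Finset.univ j0 (fun i => v (s i))]
    simp
  rw [Finset.sum_congr rfl (fun s _ => h1 s),
    aux_prodE (fun i y => p y * ((if i = i0 then u y else 1) * (if i = j0 then v y else 1)))]
  have h2 : ∀ i : Fin n, (∑ y, p y * ((if i = i0 then u y else 1) * (if i = j0 then v y else 1)))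
      = (if i = i0 then ∑ y, p y * u y else 1) * (if i = j0 then ∑ y, p y * v y else 1) := by
    intro i
    by_cases h : i = i0 <;> by_cases h' : i = j0
    · exact absurd (h ▸ h') hij
    · simp [h, h', hij, hij.symm]
    · simp [h, h', hij, hij.symm]
    · simp [h, h', hp1]
  rw [Finset.prod_congr rfl (fun i _ => h2 i), Finset.prod_mul_distrib,
    Finset.prod_ite_eq' Finset.univ i0 (fun _ => ∑ y, p y * u y),
    Finset.prod_ite_eq' Finset.univ j0 (fun _ => ∑ y, p y * v y)]
  simp

private lemma aux_mean (p : X → ℝ) (hp1 : ∑ x, p x = 1) {n : ℕ} (h : X → ℝ) :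
    ∑ s : Fin n → X, (∏ i, p (s i)) * (∑ i, h (s i)) = n * (∑ y, p y * h y) := by
  have : ∀ s : Fin n → X, (∏ i, p (s i)) * (∑ i, h (s i))
      = ∑ i, (∏ j, p (s j)) * h (s i) := fun s => Finset.mul_sum _ _ _
  rw [Finset.sum_congr rfl (fun s _ => this s), Finset.sum_comm]
  rw [Finset.sum_congr rfl (fun i (_ : i ∈ Finset.univ) => aux_coord p hp1 i h)]
  simp [mul_comm]

private lemma aux_sq (p : X → ℝ) (hp1 : ∑ x, p x = 1) {n : ℕ} (h : X → ℝ) :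
    ∑ s : Fin n → X, (∏ i, p (s i)) * (∑ i, h (s i)) ^ 2
      = n * (∑ y, p y * (h y * h y)) + ((n : ℝ) ^ 2 - n) * (∑ y, p y * h y) ^ 2 := by
  have expand : ∀ s : Fin n → X, (∏ i, p (s i)) * (∑ i, h (s i)) ^ 2
      = ∑ i, ∑ j, (∏ k, p (s k)) * (h (s i) * h (s j)) := by
    intro s
    rw [sq, Finset.sum_mul_sum, Finset.mul_sum]
    exact Finset.sum_congr rfl fun i _ => Finset.mul_sum _ _ _
  rw [Finset.sum_congr rfl (fun s _ => expand s), Finset.sum_comm]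
  have swap2 : ∀ i : Fin n, ∑ s : Fin n → X, ∑ j : Fin n, (∏ k, p (s k)) * (h (s i) * h (s j))
      = ∑ j : Fin n, ∑ s : Fin n → X, (∏ k, p (s k)) * (h (s i) * h (s j)) :=
    fun i => Finset.sum_comm
  rw [Finset.sum_congr rfl (fun i (_ : i ∈ Finset.univ) => swap2 i)]
  have inner : ∀ i j : Fin n, ∑ s : Fin n → X, (∏ k, p (s k)) * (h (s i) * h (s j))
      = (∑ y, p y * h y) ^ 2 + if i = j then (∑ y, p y * (h y * h y)) - (∑ y, p y * h y) ^ 2 else 0 := by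
    intro i j
    by_cases hij : i = j
    · subst hij
      rw [aux_coord p hp1 i (fun y => h y * h y)]
      simp
    · rw [aux_pair p hp1 hij h h]
      simp [sq, hij]
  calc ∑ i : Fin n, ∑ j : Fin n, ∑ s : Fin n → X, (∏ k, p (s k)) * (h (s i) * h (s j))
      = ∑ i : Fin n, ∑ j : Fin n, ((∑ y, p y * h y) ^ 2
          + if i = j then (∑ y, p y * (h y * h y)) - (∑ y, p y * h y) ^ 2 else 0) := by
        exact Finset.sum_congr rfl fun i _ => Finset.sum_congr rfl fun j _ => inner i j
    _ = ∑ i : Fin n, ((n : ℝ) * (∑ y, p y * h y) ^ 2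
          + ((∑ y, p y * (h y * h y)) - (∑ y, p y * h y) ^ 2)) := by
        refine Finset.sum_congr rfl fun i _ => ?_
        rw [Finset.sum_add_distrib, Finset.sum_const, Finset.sum_ite_eq]
        simp [mul_comm]
    _ = n * (∑ y, p y * (h y * h y)) + ((n : ℝ) ^ 2 - n) * (∑ y, p y * h y) ^ 2 := by
        rw [Finset.sum_const]
        simp only [Finset.card_univ, Fintype.card_fin, nsmul_eq_mul]
        ring

/-- Centered second moment bound. -/
private lemma aux_var (p : X → ℝ) (hp1 : ∑ x, p x = 1) {n : ℕ} (h : X → ℝ) :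
    ∑ s : Fin n → X, (∏ i, p (s i)) * ((∑ i, h (s i)) - n * (∑ y, p y * h y)) ^ 2
      ≤ n * (∑ y, p y * (h y * h y)) := by
  have key : ∀ s : Fin n → X,
      (∏ i, p (s i)) * ((∑ i, h (s i)) - n * (∑ y, p y * h y)) ^ 2
      = (∏ i, p (s i)) * (∑ i, h (s i)) ^ 2
        - (2 * (n * (∑ y, p y * h y))) * ((∏ i, p (s i)) * (∑ i, h (s i)))
        + ((n * (∑ y, p y * h y)) ^ 2) * (∏ i, p (s i)) := by
    intro s; ring
  rw [Finset.sum_congr rfl (fun s _ => key s), Finset.sum_add_distrib,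
    Finset.sum_sub_distrib, ← Finset.mul_sum, ← Finset.mul_sum,
    aux_sq p hp1 h, aux_mean p hp1 h, aux_one p hp1 n]
  have hnn : (0:ℝ) ≤ (n:ℝ) * (∑ y, p y * h y) ^ 2 := by positivity
  nlinarith [hnn]

/-- First absolute moment bound via Cauchy–Schwarz. -/
private lemma aux_abs (p : X → ℝ) (hp0 : ∀ x, 0 < p x) (hp1 : ∑ x, p x = 1) {n : ℕ}
    (h : X → ℝ) :
    ∑ s : Fin n → X, (∏ i, p (s i)) * |(∑ i, h (s i)) - n * (∑ y, p y * h y)|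
      ≤ Real.sqrt ((n : ℝ) * (∑ y, p y * (h y * h y))) := by
  set Z : (Fin n → X) → ℝ := fun s => (∑ i, h (s i)) - n * (∑ y, p y * h y) with hZ
  have hq : ∀ s : Fin n → X, (0:ℝ) ≤ ∏ i, p (s i) :=
    fun s => Finset.prod_nonneg fun i _ => (hp0 _).le
  have hcs : (∑ s : Fin n → X, (∏ i, p (s i)) * |Z s|) ^ 2
      ≤ (∑ s : Fin n → X, ∏ i, p (s i)) * ∑ s : Fin n → X, (∏ i, p (s i)) * (Z s) ^ 2 := by
    refine Finset.sum_sq_le_sum_mul_sum_of_sq_eq_mul Finset.univ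
      (fun s _ => hq s) (fun s _ => mul_nonneg (hq s) (sq_nonneg _)) (fun s _ => ?_)
    rw [mul_pow, sq_abs]
    ring
  rw [aux_one p hp1 n, one_mul] at hcs
  have h2 := aux_var p hp1 (n := n) h
  have hnonneg : (0:ℝ) ≤ ∑ s : Fin n → X, (∏ i, p (s i)) * |Z s| :=
    Finset.sum_nonneg fun s _ => mul_nonneg (hq s) (abs_nonneg _)
  have hy : (0:ℝ) ≤ (n : ℝ) * (∑ y, p y * (h y * h y)) :=
    mul_nonneg (Nat.cast_nonneg n)
      (Finset.sum_nonneg fun y _ => mul_nonneg (hp0 y).le (mul_self_nonneg _))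
  rw [Real.le_sqrt hnonneg hy]
  exact hcs.trans h2


/-- The main quantitative estimate: the expected ratio is within `O(1/√n)` of `a/b`. -/
private lemma aux_main (p : X → ℝ) (hp0 : ∀ x, 0 < p x) (hp1 : ∑ x, p x = 1)
    (F G : X → ℝ) (hF0 : ∀ y, 0 ≤ F y)
    (m : ℝ) (hm : 0 < m) (hmle : ∀ y, m ≤ G y)
    {n : ℕ} (hn : 1 ≤ n) :
    |(∑ s : Fin n → X, (∏ i, p (s i)) * ((∑ i, F (s i)) / (∑ j, G (s j))))
        - (∑ y, p y * F y) / (∑ y, p y * G y)|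
      ≤ ((∑ y, p y * G y) * Real.sqrt (∑ y, p y * (F y * F y))
          + (∑ y, p y * F y) * Real.sqrt (∑ y, p y * (G y * G y)))
        / (m * (∑ y, p y * G y)) / Real.sqrt n := by
  have hX : Nonempty X := by
    rcases isEmpty_or_nonempty X with hE | hNE
    · simp at hp1
    · exact hNE
  set a : ℝ := ∑ y, p y * F y with hadef
  set b : ℝ := ∑ y, p y * G y with hbdef
  have hG0 : ∀ y, 0 < G y := fun y => hm.trans_le (hmle y)
  have hb : 0 < b := Finset.sum_pos (fun y _ => mul_pos (hp0 y) (hG0 y)) Finset.univ_nonempty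
  have ha : 0 ≤ a := Finset.sum_nonneg fun y _ => mul_nonneg (hp0 y).le (hF0 y)
  have hn' : (0:ℝ) < n := by exact_mod_cast hn
  have hq : ∀ s : Fin n → X, (0:ℝ) ≤ ∏ i, p (s i) :=
    fun s => Finset.prod_nonneg fun i _ => (hp0 _).le
  have hDen : ∀ s : Fin n → X, (n:ℝ) * m ≤ ∑ j, G (s j) := by
    intro s
    calc (n:ℝ) * m = ∑ _j : Fin n, m := by simp [mul_comm]
      _ ≤ ∑ j, G (s j) := Finset.sum_le_sum fun j _ => hmle _
  have hDpos : ∀ s : Fin n → X, 0 < ∑ j, G (s j) :=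
    fun s => lt_of_lt_of_le (by positivity) (hDen s)
  -- pointwise bound
  have hpt : ∀ s : Fin n → X, |(∑ i, F (s i)) / (∑ j, G (s j)) - a / b|
      ≤ (b * |(∑ i, F (s i)) - n * a| + a * |(∑ j, G (s j)) - n * b|) / (((n:ℝ) * m) * b) := by
    intro s
    have hDe : 0 < ∑ j, G (s j) := hDpos s
    rw [div_sub_div _ _ hDe.ne' hb.ne', abs_div, abs_of_pos (mul_pos hDe hb)]
    have hnum : |(∑ i, F (s i)) * b - (∑ j, G (s j)) * a|
        ≤ b * |(∑ i, F (s i)) - n * a| + a * |(∑ j, G (s j)) - n * b| := by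
      have hrw : (∑ i, F (s i)) * b - (∑ j, G (s j)) * a
          = ((∑ i, F (s i)) - n * a) * b - a * ((∑ j, G (s j)) - n * b) := by ring
      rw [hrw]
      calc |((∑ i, F (s i)) - n * a) * b - a * ((∑ j, G (s j)) - n * b)|
          ≤ |((∑ i, F (s i)) - n * a) * b| + |a * ((∑ j, G (s j)) - n * b)| := abs_sub _ _
        _ = b * |(∑ i, F (s i)) - n * a| + a * |(∑ j, G (s j)) - n * b| := by
            rw [abs_mul, abs_mul, abs_of_pos hb, abs_of_nonneg ha]; ring
    refine div_le_div₀ (by positivity) hnum (by positivity) ?_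
    exact mul_le_mul_of_nonneg_right (hDen s) hb.le
  -- split off the constant
  have split : (∑ s : Fin n → X, (∏ i, p (s i)) * ((∑ i, F (s i)) / (∑ j, G (s j)))) - a / b
      = ∑ s : Fin n → X, (∏ i, p (s i)) * ((∑ i, F (s i)) / (∑ j, G (s j)) - a / b) := by
    simp only [mul_sub, Finset.sum_sub_distrib, ← Finset.sum_mul, aux_one p hp1 n, one_mul]
  have hsn : Real.sqrt n * Real.sqrt n = (n:ℝ) := Real.mul_self_sqrt (Nat.cast_nonneg n)
  have hsnpos : 0 < Real.sqrt n := Real.sqrt_pos.2 hn'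
  have S1 := aux_abs p hp0 hp1 (n := n) F
  have S2 := aux_abs p hp0 hp1 (n := n) G
  calc |(∑ s : Fin n → X, (∏ i, p (s i)) * ((∑ i, F (s i)) / (∑ j, G (s j)))) - a / b|
      = |∑ s : Fin n → X, (∏ i, p (s i)) * ((∑ i, F (s i)) / (∑ j, G (s j)) - a / b)| := by
        rw [split]
    _ ≤ ∑ s : Fin n → X, |(∏ i, p (s i)) * ((∑ i, F (s i)) / (∑ j, G (s j)) - a / b)| :=
        Finset.abs_sum_le_sum_abs _ _
    _ = ∑ s : Fin n → X, (∏ i, p (s i)) * |(∑ i, F (s i)) / (∑ j, G (s j)) - a / b| := by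
        refine Finset.sum_congr rfl fun s _ => ?_
        rw [abs_mul, abs_of_nonneg (hq s)]
    _ ≤ ∑ s : Fin n → X, (∏ i, p (s i)) *
          ((b * |(∑ i, F (s i)) - n * a| + a * |(∑ j, G (s j)) - n * b|) / (((n:ℝ) * m) * b)) :=
        Finset.sum_le_sum fun s _ => mul_le_mul_of_nonneg_left (hpt s) (hq s)
    _ = (b * (∑ s : Fin n → X, (∏ i, p (s i)) * |(∑ i, F (s i)) - n * a|)
          + a * (∑ s : Fin n → X, (∏ i, p (s i)) * |(∑ j, G (s j)) - n * b|))
        / (((n:ℝ) * m) * b) := by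
        rw [Finset.sum_congr rfl (fun s (_ : s ∈ Finset.univ) => show
          (∏ i, p (s i)) * ((b * |(∑ i, F (s i)) - n * a| + a * |(∑ j, G (s j)) - n * b|)
            / (((n:ℝ) * m) * b))
          = (b * ((∏ i, p (s i)) * |(∑ i, F (s i)) - n * a|)
              + a * ((∏ i, p (s i)) * |(∑ j, G (s j)) - n * b|)) / (((n:ℝ) * m) * b) by ring),
          ← Finset.sum_div, Finset.sum_add_distrib, ← Finset.mul_sum, ← Finset.mul_sum]
    _ ≤ (b * Real.sqrt ((n:ℝ) * (∑ y, p y * (F y * F y)))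
          + a * Real.sqrt ((n:ℝ) * (∑ y, p y * (G y * G y)))) / (((n:ℝ) * m) * b) := by
        gcongr
    _ = (b * Real.sqrt (∑ y, p y * (F y * F y)) + a * Real.sqrt (∑ y, p y * (G y * G y)))
        / (m * b) / Real.sqrt n := by
        rw [Real.sqrt_mul (Nat.cast_nonneg n), Real.sqrt_mul (Nat.cast_nonneg n)]
        set t := Real.sqrt (n:ℝ) with ht
        rw [← hsn]
        generalize Real.sqrt (∑ y, p y * (F y * F y)) = c1
        generalize Real.sqrt (∑ y, p y * (G y * G y)) = c2
        field_simp

end Aux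

/-- Correctness of resampling (Algorithm 1): drawing `n` i.i.d. samples from
`p` and resampling index `i` with probability `w(x_i)/∑_j w(x_j)` gives a
distribution `r n` with `r 1 = p`, and `r n x → p(x)·w(x)/∑_y p(y)·w(y)`
as `n → ∞`. -/
theorem stmt_7 {X : Type*} [Fintype X] [DecidableEq X]
    (p : X → ℝ) (hp0 : ∀ x, 0 < p x) (hp1 : ∑ x, p x = 1)
    (w : X → ℝ) (hw : ∀ x, 0 < w x)
    (r : ℕ → X → ℝ)
    (hr : r = fun n x => ∑ s : Fin n → X, (∏ i, p (s i)) *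
        ((∑ i : Fin n, if s i = x then w (s i) else 0) / ∑ j : Fin n, w (s j))) :
    (∀ x, r 1 x = p x) ∧
    (∀ x, Tendsto (fun n => r n x) atTop
        (nhds (p x * w x / ∑ y, p y * w y))) := by
  subst hr
  have hX : Nonempty X := by
    rcases isEmpty_or_nonempty X with hE | hNE
    · simp at hp1
    · exact hNE
  constructor
  · -- the n = 1 case
    intro x
    have key := Fintype.sum_equiv (Equiv.funUnique (Fin 1) X)
      (fun s : Fin 1 → X => (∏ i, p (s i)) *
        ((∑ i : Fin 1, if s i = x then w (s i) else 0) / ∑ j : Fin 1, w (s j)))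
      (fun y => if y = x then p y else 0)
      (fun s => by
        have hne : w (s 0) ≠ 0 := (hw (s 0)).ne'
        by_cases h : s 0 = x
        · subst h
          simp [Fin.sum_univ_one, Fin.prod_univ_one, Equiv.funUnique, hne]
        · simp [Fin.sum_univ_one, Fin.prod_univ_one, Equiv.funUnique, h])
    simpa using key
  · -- the limit
    intro x
    have hb : 0 < ∑ y, p y * w y :=
      Finset.sum_pos (fun y _ => mul_pos (hp0 y) (hw y)) Finset.univ_nonempty
    obtain ⟨z, -, hz⟩ := Finset.exists_min_image Finset.univ w Finset.univ_nonempty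
    have hm : 0 < w z := hw z
    have hmle : ∀ y, w z ≤ w y := fun y => hz y (Finset.mem_univ y)
    have hF0 : ∀ y : X, (0:ℝ) ≤ if y = x then w y else 0 := by
      intro y; by_cases h : y = x <;> simp [h, (hw x).le]
    have haF : (∑ y, p y * if y = x then w y else 0) = p x * w x := by
      rw [Finset.sum_congr rfl (fun y (_ : y ∈ Finset.univ) => show
        (p y * if y = x then w y else 0) = if y = x then p y * w y else 0 by
          by_cases h : y = x <;> simp [h]),
        Finset.sum_ite_eq' Finset.univ x (fun y => p y * w y)]
      simp
    -- the quantitative constant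
    set C : ℝ := ((∑ y, p y * w y) * Real.sqrt (∑ y, p y *
          ((if y = x then w y else 0) * (if y = x then w y else 0)))
        + (p x * w x) * Real.sqrt (∑ y, p y * (w y * w y)))
        / (w z * (∑ y, p y * w y)) with hC
    have key : ∀ n : ℕ, 1 ≤ n →
        |(∑ s : Fin n → X, (∏ i, p (s i)) *
            ((∑ i : Fin n, if s i = x then w (s i) else 0) / ∑ j : Fin n, w (s j)))
          - p x * w x / ∑ y, p y * w y| ≤ C / Real.sqrt n := by
      intro n hn
      have happ := aux_main p hp0 hp1 (fun y => if y = x then w y else 0) w hF0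
        (w z) hm hmle (n := n) hn
      rw [haF] at happ
      exact happ
    have hlim : Tendsto (fun n : ℕ => C / Real.sqrt n) atTop (nhds 0) := by
      have hsq : Tendsto (fun n : ℕ => Real.sqrt n) atTop atTop := by
        refine tendsto_atTop_atTop.2 fun c => ⟨⌈c⌉₊ ^ 2, fun n hn => ?_⟩
        calc c ≤ (⌈c⌉₊ : ℝ) := Nat.le_ceil c
          _ = Real.sqrt (((⌈c⌉₊ : ℝ)) ^ 2) := by rw [Real.sqrt_sq (Nat.cast_nonneg _)]
          _ ≤ Real.sqrt n := Real.sqrt_le_sqrt (by exact_mod_cast hn)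
      have := (hsq.inv_tendsto_atTop).const_mul C
      simpa [div_eq_mul_inv] using this
    have hzero : Tendsto (fun n : ℕ =>
        (∑ s : Fin n → X, (∏ i, p (s i)) *
            ((∑ i : Fin n, if s i = x then w (s i) else 0) / ∑ j : Fin n, w (s j)))
          - p x * w x / ∑ y, p y * w y) atTop (nhds 0) := by
      refine squeeze_zero_norm' ?_ hlim
      filter_upwards [eventually_ge_atTop 1] with n hn
      simpa using key n hn
    have := hzero.add_const (p x * w x / ∑ y, p y * w y)
    simpa using this
end

section
/- Let Y be a positive bounded random variable bounded below by c > 0 with E[Y] = μ, and T_n = log((1/n)∑_{i=1}^n Y_i) for i.i.d. copies Y_i. Then log μ - E[T_n] ≤ Var(Y)/(2 c^2 n), so the bias of T_n as an estimator of log μ is O(1/n). -/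
open Real MeasureTheory Finset

section aux

variable {ι : Type*} [Fintype ι] [DecidableEq ι]

lemma prod_two_aux (i j : ι) (hij : i ≠ j) (a b : ι → ℝ) :
    ∏ k, (if k = i then a k else if k = j then b k else 1) = a i * b j := by
  rw [← Finset.mul_prod_erase _ _ (Finset.mem_univ i), if_pos rfl,
    ← Finset.mul_prod_erase _ _ (Finset.mem_erase.2 ⟨hij.symm, Finset.mem_univ j⟩),
    if_neg hij.symm, if_pos rfl, Finset.prod_eq_one, mul_one]
  intro k hk
  rw [Finset.mem_erase, Finset.mem_erase] at hk
  rw [if_neg hk.2.1, if_neg hk.1]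

lemma prod_one_aux (i : ι) (a : ι → ℝ) :
    ∏ k, (if k = i then a k else 1) = a i := by
  rw [Finset.prod_ite_eq' Finset.univ i a, if_pos (Finset.mem_univ i)]

variable {α : Type*} [MeasureSpace α] [IsProbabilityMeasure (volume : Measure α)]

lemma pi_integral_one (g : α → ℝ) (i : ι) :
    ∫ x : ι → α, g (x i) = ∫ x, g x := by
  calc ∫ x : ι → α, g (x i)
      = ∫ x : ι → α, ∏ k, (fun k => if k = i then g else fun _ => (1:ℝ)) k (x k) := by
        refine integral_congr_ae (Filter.Eventually.of_forall fun x => ?_)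
        simp only [ite_apply]
        exact (prod_one_aux i fun k => g (x k)).symm
    _ = ∏ k, ∫ x : α, (fun k => if k = i then g else fun _ => (1:ℝ)) k x :=
        integral_fintype_prod_volume_eq_prod _
    _ = ∫ x, g x := by
        have h : ∀ k : ι, (∫ x : α, (fun k => if k = i then g else fun _ => (1:ℝ)) k x)
            = if k = i then ∫ x, g x else 1 := by
          intro k
          by_cases hk : k = i
          · subst hk; simp
          · simp [hk]
        rw [Finset.prod_congr rfl fun k _ => h k, prod_one_aux i fun _ => ∫ x, g x]

lemma pi_integral_two (g h : α → ℝ) (i j : ι) (hij : i ≠ j) :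
    ∫ x : ι → α, g (x i) * h (x j) = (∫ x, g x) * (∫ x, h x) := by
  calc ∫ x : ι → α, g (x i) * h (x j)
      = ∫ x : ι → α, ∏ k, (fun k => if k = i then g else if k = j then h else fun _ => (1:ℝ)) k (x k) := by
        refine integral_congr_ae (Filter.Eventually.of_forall fun x => ?_)
        simp only [ite_apply]
        exact (prod_two_aux i j hij (fun k => g (x k)) (fun k => h (x k))).symm
    _ = ∏ k, ∫ x : α, (fun k => if k = i then g else if k = j then h else fun _ => (1:ℝ)) k x :=
        integral_fintype_prod_volume_eq_prod _
    _ = (∫ x, g x) * (∫ x, h x) := by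
        have hh : ∀ k : ι, (∫ x : α, (fun k => if k = i then g else if k = j then h else fun _ => (1:ℝ)) k x)
            = if k = i then ∫ x, g x else if k = j then ∫ x, h x else 1 := by
          intro k
          by_cases hk : k = i
          · subst hk; simp
          · by_cases hk' : k = j
            · subst hk'; simp [hk]
            · simp [hk, hk']
        rw [Finset.prod_congr rfl fun k _ => hh k,
          prod_two_aux i j hij (fun _ => ∫ x, g x) (fun _ => ∫ x, h x)]

end aux

lemma log_key {c m s : ℝ} (hc : 0 < c) (hm : c ≤ m) (hs : c ≤ s) :
    Real.log m - Real.log s ≤ -((s - m)/m) + (s - m)^2/(2*c^2) := by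
  have hm0 : 0 < m := hc.trans_le hm
  have hs0 : 0 < s := hc.trans_le hs
  set g : ℝ → ℝ := fun x => Real.log x + (x - m)^2/(2*c^2) - x/m with hg
  have hderiv : ∀ x : ℝ, 0 < x → HasDerivAt g (1/x + (x - m)/c^2 - 1/m) x := by
    intro x hx
    have h1 : HasDerivAt (fun x : ℝ => (x - m)^2/(2*c^2)) ((x - m)/c^2) x := by
      have := (((hasDerivAt_id x).sub_const m).pow 2).div_const (2*c^2)
      refine this.congr_deriv ?_
      field_simp
      simp
    have h2 : HasDerivAt (fun x : ℝ => x/m) (1/m) x := by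
      simpa using (hasDerivAt_id x).div_const m
    have := ((Real.hasDerivAt_log hx.ne').add h1).sub h2
    simp only [one_div] at this ⊢
    exact this
  have hcont : ContinuousOn g (Set.Ici c) := by
    intro x hx
    exact ((hderiv x (hc.trans_le hx)).continuousAt).continuousWithinAt
  have hkey : g m ≤ g s := by
    rcases le_total s m with h | h
    · have anti : AntitoneOn g (Set.Icc c m) := by
        apply antitoneOn_of_deriv_nonpos (convex_Icc c m) (hcont.mono Set.Icc_subset_Ici_self)
        · intro x hx
          rw [interior_Icc] at hx
          exact (hderiv x (hc.trans hx.1)).differentiableAt.differentiableWithinAt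
        · intro x hx
          rw [interior_Icc] at hx
          have hx0 : 0 < x := hc.trans hx.1
          rw [(hderiv x hx0).deriv]
          have h1 : 1/x - 1/m = (m - x)/(x*m) := by rw [div_sub_div _ _ hx0.ne' hm0.ne']; ring_nf
          have ha : (0:ℝ) ≤ m - x := by linarith [hx.2]
          have hb : c^2 ≤ x*m := by nlinarith [hx.1, hm, hc.le]
          have h2 : (m - x)/(x*m) ≤ (m - x)/c^2 :=
            div_le_div_of_nonneg_left ha (by positivity) hb
          have h3 : (x - m)/c^2 = -((m - x)/c^2) := by ring
          linarith
      exact anti ⟨hs, h⟩ ⟨hm, le_refl m⟩ h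
    · have mono : MonotoneOn g (Set.Ici m) := by
        apply monotoneOn_of_deriv_nonneg (convex_Ici m) (hcont.mono (Set.Ici_subset_Ici.2 hm))
        · intro x hx
          rw [interior_Ici] at hx
          exact (hderiv x (hm0.trans hx)).differentiableAt.differentiableWithinAt
        · intro x hx
          rw [interior_Ici] at hx
          have hx0 : 0 < x := hm0.trans hx
          rw [(hderiv x hx0).deriv]
          have h1 : 1/m - 1/x = (x - m)/(x*m) := by rw [div_sub_div _ _ hm0.ne' hx0.ne']; ring_nf
          have hxm : m < x := hx
          have ha : (0:ℝ) ≤ x - m := by linarith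
          have hb : c^2 ≤ x*m := by nlinarith
          have h2 : (x - m)/(x*m) ≤ (x - m)/c^2 :=
            div_le_div_of_nonneg_left ha (by positivity) hb
          linarith
      exact mono (Set.self_mem_Ici) h h
  have h2 : (s - m)/m = s/m - 1 := by field_simp
  simp only [hg] at hkey
  have h3 : (m - m)^2/(2*c^2) = 0 := by simp
  have h4 : m/m = 1 := div_self hm0.ne'
  nlinarith [hkey]

/-- Quantitative bias bound for the log-partition estimator: for `Y` bounded
below by `c > 0` and bounded above, with mean `μ`,
`log μ - E[T_n] ≤ Var(Y)/(2 c² n)`. -/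
theorem stmt_11 {Ω : Type*} [MeasurableSpace Ω]
    (P : Measure Ω) [IsProbabilityMeasure P]
    (Y : Ω → ℝ) (hYm : Measurable Y)
    (c C : ℝ) (hc : 0 < c) (hbd : ∀ ω, c ≤ Y ω ∧ Y ω ≤ C)
    (μval : ℝ) (hμ : μval = ∫ ω, Y ω ∂P)
    (n : ℕ) (hn : 0 < n) :
    Real.log μval -
        (∫ ω : Fin n → Ω, Real.log ((1 / (n : ℝ)) * ∑ i, Y (ω i))
          ∂(Measure.pi fun _ => P))
      ≤ (∫ ω, (Y ω - μval) ^ 2 ∂P) / (2 * c ^ 2 * n) := by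
  letI : MeasureSpace Ω := ⟨P⟩
  haveI : IsProbabilityMeasure (volume : Measure Ω) := ‹IsProbabilityMeasure P›
  have hνvol : (Measure.pi fun _ : Fin n => P) = (volume : Measure (Fin n → Ω)) := rfl
  rw [hνvol]
  haveI : IsProbabilityMeasure (volume : Measure (Fin n → Ω)) := by
    rw [← hνvol]; infer_instance
  have hn' : (0:ℝ) < n := Nat.cast_pos.2 hn
  have hYint : Integrable Y P :=
    (integrable_const C).mono' hYm.aestronglyMeasurable
      (Filter.Eventually.of_forall fun ω => abs_le.2
        ⟨by linarith [(hbd ω).1, (hbd ω).2, hc], (hbd ω).2⟩)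
  have hμc : c ≤ μval := by
    rw [hμ]
    calc c = ∫ _ : Ω, c ∂P := by simp
      _ ≤ ∫ ω, Y ω ∂P := integral_mono (integrable_const c) hYint fun ω => (hbd ω).1
  have hμC : μval ≤ C := by
    rw [hμ]
    calc ∫ ω, Y ω ∂P ≤ ∫ _ : Ω, C ∂P :=
          integral_mono hYint (integrable_const C) fun ω => (hbd ω).2
      _ = C := by simp
  have hμ0 : 0 < μval := hc.trans_le hμc
  set S : (Fin n → Ω) → ℝ := fun x => (1 / (n:ℝ)) * ∑ i, Y (x i) with hSdef
  have hSmeas : Measurable S :=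
    measurable_const.mul (Finset.measurable_sum _ fun i _ => hYm.comp (measurable_pi_apply i))
  have hSbd : ∀ x, c ≤ S x ∧ S x ≤ C := by
    intro x
    have h1 : (n:ℝ) * c ≤ ∑ i, Y (x i) := by
      calc (n:ℝ) * c = ∑ _i : Fin n, c := by simp [mul_comm]
        _ ≤ _ := Finset.sum_le_sum fun i _ => (hbd (x i)).1
    have h2 : ∑ i, Y (x i) ≤ (n:ℝ) * C := by
      calc ∑ i, Y (x i) ≤ ∑ _i : Fin n, C := Finset.sum_le_sum fun i _ => (hbd (x i)).2
        _ = (n:ℝ) * C := by simp [mul_comm]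
    constructor
    · rw [hSdef]; dsimp only; rw [one_div, inv_mul_eq_div, le_div_iff₀ hn']; linarith
    · rw [hSdef]; dsimp only; rw [one_div, inv_mul_eq_div, div_le_iff₀ hn']; linarith
  have hcoordint : ∀ i : Fin n,
      Integrable (fun x : Fin n → Ω => Y (x i)) (volume : Measure (Fin n → Ω)) := by
    intro i
    refine (integrable_const C).mono'
      (show Measurable fun x : Fin n → Ω => Y (x i) from hYm.comp (measurable_pi_apply i)).aestronglyMeasurable
      (Filter.Eventually.of_forall fun x => abs_le.2
        ⟨by linarith [(hbd (x i)).1, (hbd (x i)).2, hc], (hbd (x i)).2⟩)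
  have hSint : Integrable S (volume : Measure (Fin n → Ω)) :=
    (integrable_const C).mono' hSmeas.aestronglyMeasurable
      (Filter.Eventually.of_forall fun x => abs_le.2
        ⟨by linarith [(hSbd x).1, (hSbd x).2, hc], (hSbd x).2⟩)
  have hlogint : Integrable (fun x => Real.log (S x)) (volume : Measure (Fin n → Ω)) := by
    refine (integrable_const (max |Real.log c| |Real.log C|)).mono'
      ((Real.measurable_log.comp hSmeas).aestronglyMeasurable)
      (Filter.Eventually.of_forall fun x => ?_)
    have h1 : Real.log c ≤ Real.log (S x) := Real.log_le_log hc (hSbd x).1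
    have h2 : Real.log (S x) ≤ Real.log C := Real.log_le_log (hc.trans_le (hSbd x).1) (hSbd x).2
    rw [Real.norm_eq_abs]
    rcases abs_cases (Real.log (S x)) with ⟨he, _⟩ | ⟨he, _⟩ <;> rw [he]
    · exact le_max_of_le_right (h2.trans (le_abs_self _))
    · exact le_max_of_le_left ((neg_le_neg h1).trans (neg_le_abs _))
  have hSqint : Integrable (fun x => (S x - μval)^2) (volume : Measure (Fin n → Ω)) := by
    refine (integrable_const ((C - c)^2)).mono'
      (((hSmeas.sub measurable_const).pow_const 2).aestronglyMeasurable)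
      (Filter.Eventually.of_forall fun x => ?_)
    rw [Real.norm_eq_abs, abs_of_nonneg (sq_nonneg _)]
    have := (hSbd x).1; have := (hSbd x).2
    nlinarith
  have hpt : ∀ x, Real.log μval - Real.log (S x)
      ≤ -((S x - μval)/μval) + (S x - μval)^2/(2*c^2) :=
    fun x => log_key hc hμc (hSbd x).1
  have hmain : ∫ x, (Real.log μval - Real.log (S x))
      ≤ ∫ x, (-((S x - μval)/μval) + (S x - μval)^2/(2*c^2)) := by
    refine integral_mono ((integrable_const _).sub hlogint) ?_ hpt
    exact (((hSint.sub (integrable_const μval)).div_const μval).neg).add (hSqint.div_const _)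
  have hLHS : ∫ x, (Real.log μval - Real.log (S x))
      = Real.log μval - ∫ x, Real.log (S x) := by
    rw [integral_sub (integrable_const _) hlogint, integral_const]
    simp
  have hRHS : ∫ x, (-((S x - μval)/μval) + (S x - μval)^2/(2*c^2))
      = -(((∫ x, S x) - μval)/μval) + (∫ x, (S x - μval)^2)/(2*c^2) := by
    have hint1 : Integrable (fun x : Fin n → Ω => -((S x - μval)/μval)) volume :=
      ((hSint.sub (integrable_const μval)).div_const μval).neg
    have hint2 : Integrable (fun x : Fin n → Ω => (S x - μval)^2/(2*c^2)) volume :=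
      hSqint.div_const _
    rw [integral_add hint1 hint2]
    congr 1
    · rw [integral_neg, integral_div, integral_sub hSint (integrable_const μval), integral_const]
      simp
    · rw [integral_div]
  have hES : ∫ x, S x = μval := by
    rw [hSdef]
    dsimp only
    rw [integral_const_mul,
      show (∫ a : Fin n → Ω, ∑ i, Y (a i)) = ∑ i, ∫ a : Fin n → Ω, Y (a i) from
        integral_finset_sum Finset.univ (fun i _ => hcoordint i),
      Finset.sum_congr rfl fun i (_ : i ∈ Finset.univ) =>
        (pi_integral_one Y i).trans hμ.symm,
      Finset.sum_const, Finset.card_univ, Fintype.card_fin, nsmul_eq_mul]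
    field_simp
  have hVar : ∫ x, (S x - μval)^2 = (∫ ω, (Y ω - μval)^2 ∂P) / n := by
    set f : Ω → ℝ := fun ω => Y ω - μval with hfdef
    have hfm : Measurable f := hYm.sub measurable_const
    have hflb : ∀ ω, -(C - c) ≤ f ω := by
      intro ω
      show -(C - c) ≤ Y ω - μval
      linarith [(hbd ω).1, hμC]
    have hfub : ∀ ω, f ω ≤ C - c := by
      intro ω
      show Y ω - μval ≤ C - c
      linarith [(hbd ω).2, hμc]
    have hf0 : ∫ ω, f ω = 0 := by
      show ∫ ω, (Y ω - μval) ∂P = 0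
      rw [integral_sub hYint (integrable_const μval)]
      simp [hμ]
    have hprodint : ∀ i j : Fin n,
        Integrable (fun x : Fin n → Ω => f (x i) * f (x j)) (volume : Measure (Fin n → Ω)) := by
      intro i j
      refine (integrable_const ((C - c)^2)).mono'
        ((show Measurable fun x : Fin n → Ω => f (x i) from hfm.comp (measurable_pi_apply i)).mul
          (show Measurable fun x : Fin n → Ω => f (x j) from hfm.comp (measurable_pi_apply j))).aestronglyMeasurable
        (Filter.Eventually.of_forall fun x => ?_)
      rw [Real.norm_eq_abs, abs_mul]
      have h1 : |f (x i)| ≤ C - c := abs_le.2 ⟨hflb _, hfub _⟩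
      have h2 : |f (x j)| ≤ C - c := abs_le.2 ⟨hflb _, hfub _⟩
      calc |f (x i)| * |f (x j)| ≤ (C - c) * (C - c) :=
            mul_le_mul h1 h2 (abs_nonneg _) ((abs_nonneg (f (x i))).trans h1)
        _ = (C - c)^2 := (sq (C - c)).symm
    have hptsq : ∀ x : Fin n → Ω, (S x - μval)^2
        = (1/(n:ℝ))^2 * ∑ i, ∑ j, f (x i) * f (x j) := by
      intro x
      have h1 : S x - μval = (1/(n:ℝ)) * ∑ i, f (x i) := by
        have : ∑ i, f (x i) = (∑ i, Y (x i)) - n * μval := by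
          rw [show (fun i : Fin n => f (x i)) = fun i => Y (x i) - μval from rfl,
            Finset.sum_sub_distrib, Finset.sum_const, Finset.card_univ, Fintype.card_fin,
            nsmul_eq_mul]
        rw [this, hSdef]
        dsimp only
        field_simp
      rw [h1, mul_pow, pow_two (∑ i, f (x i)), Finset.sum_mul_sum]
    calc ∫ x, (S x - μval)^2
        = ∫ x : Fin n → Ω, (1/(n:ℝ))^2 * ∑ i, ∑ j, f (x i) * f (x j) :=
          integral_congr_ae (Filter.Eventually.of_forall hptsq)
      _ = (1/(n:ℝ))^2 * ∑ i, ∑ j, ∫ x : Fin n → Ω, f (x i) * f (x j) := by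
          rw [integral_const_mul,
            show (∫ x : Fin n → Ω, ∑ i, ∑ j, f (x i) * f (x j))
                = ∑ i, ∫ x : Fin n → Ω, ∑ j, f (x i) * f (x j) from
              integral_finset_sum Finset.univ (fun i _ =>
                integrable_finset_sum Finset.univ (fun j _ => hprodint i j)),
            Finset.sum_congr rfl fun i (_ : i ∈ Finset.univ) =>
              integral_finset_sum Finset.univ (fun j _ => hprodint i j)]
      _ = (1/(n:ℝ))^2 * ∑ i, ∑ j, (if i = j then ∫ ω, (Y ω - μval)^2 ∂P else 0) := by
          have hterm : ∀ i j : Fin n, (∫ x : Fin n → Ω, f (x i) * f (x j))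
              = if i = j then ∫ ω, (Y ω - μval)^2 ∂P else 0 := by
            intro i j
            by_cases hij : i = j
            · subst hij
              rw [if_pos rfl]
              have heq : ∀ x : Fin n → Ω, f (x i) * f (x i) = (fun ω => (Y ω - μval)^2) (x i) := by
                intro x
                show (Y (x i) - μval) * (Y (x i) - μval) = (Y (x i) - μval)^2
                ring
              rw [integral_congr_ae (Filter.Eventually.of_forall heq)]
              exact pi_integral_one (fun ω => (Y ω - μval)^2) i
            · rw [if_neg hij, pi_integral_two f f i j hij, hf0, mul_zero]
          rw [Finset.sum_congr rfl fun i (_ : i ∈ Finset.univ) =>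
            Finset.sum_congr rfl fun j (_ : j ∈ Finset.univ) => hterm i j]
      _ = (∫ ω, (Y ω - μval)^2 ∂P) / n := by
          simp only [Finset.sum_ite_eq, Finset.mem_univ, if_true, Finset.sum_const,
            Finset.card_univ, Fintype.card_fin, nsmul_eq_mul]
          field_simp
  rw [hLHS, hRHS, hES, hVar] at hmain
  have heq : (∫ ω, (Y ω - μval)^2 ∂P) / ↑n / (2*c^2)
      = (∫ ω, (Y ω - μval)^2 ∂P) / (2 * c ^ 2 * ↑n) := by
    rw [div_div, mul_comm (n:ℝ)]
  rw [sub_self, zero_div, neg_zero, zero_add, heq] at hmain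
  exact hmain
end
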